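/- For 0 ≤ c₁ < c₂ < ... < cₙ and a diagonal matrix A ∈ SO(n) with entries εᵢ = ±1, the Hessian of f_C(X) = Σₖ cₖ·Xₖₖ at A, in the coordinates given by the rotations B_{ij}(θ), is a diagonal matrix with entries −cᵢεᵢ − cⱼεⱼ (for i < j), all of which are nonzero; hence A is a non-degenerate critical point of f_C. -/

import Mathlib

attribute [local instance] Matrix.normedAddCommGroup Matrix.normedSpace

/-- The index set of pairs `i < j` in `Fin n`. -/
def Pairs (n : ℕ) := {p : Fin n × Fin n // p.1 < p.2}

instance (n : ℕ) : Fintype (Pairs n) := Subtype.fintype _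
instance (n : ℕ) : DecidableEq (Pairs n) := Subtype.instDecidableEq

/-- The rotation matrix `B i j θ`: the identity except with `cos θ` at `(i,i)` and `(j,j)`,
`-sin θ` at `(i,j)` and `sin θ` at `(j,i)`. -/
noncomputable def rotB (n : ℕ) (i j : Fin n) (θ : ℝ) : Matrix (Fin n) (Fin n) ℝ :=
  Matrix.of fun k l =>
    if k = i ∧ l = i then Real.cos θ
    else if k = j ∧ l = j then Real.cos θ
    else if k = i ∧ l = j then -Real.sin θ
    else if k = j ∧ l = i then Real.sin θ
    else if k = l then 1 else 0

/-- The Hessian of `f_C` at `A` in the local coordinates given by the rotations `B_{ij}`,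
indexed by pairs `i < j`. -/
noncomputable def hessB (n : ℕ) (c : Fin n → ℝ) (A : Matrix (Fin n) (Fin n) ℝ) :
    Matrix (Pairs n) (Pairs n) ℝ :=
  Matrix.of fun p q =>
    deriv (fun φ => deriv
      (fun θ => ∑ k, c k * (A * rotB n p.1.1 p.1.2 θ * rotB n q.1.1 q.1.2 φ) k k) 0) 0

lemma hasDerivAt_ite_aux {P : Prop} [Decidable P] {f : ℝ → ℝ} {f' : ℝ} {x : ℝ}
    (h : HasDerivAt f f' x) :
    HasDerivAt (fun θ => if P then f θ else 0) (if P then f' else 0) x := by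
  split_ifs with h'
  · exact h
  · simpa using hasDerivAt_const x (0 : ℝ)

lemma rotB_eq (n : ℕ) (i j : Fin n) (hij : i ≠ j) (θ : ℝ) (k m : Fin n) :
    rotB n i j θ k m =
      (if k = m ∧ (k = i ∨ k = j) then Real.cos θ else 0) +
      (if k = i ∧ m = j then -Real.sin θ else 0) +
      (if k = j ∧ m = i then Real.sin θ else 0) +
      (if k = m ∧ ¬(k = i ∨ k = j) then 1 else 0) := by
  unfold rotB
  simp only [Matrix.of_apply]
  split_ifs <;> simp_all <;> omega

lemma hasDerivAt_rotB (n : ℕ) (i j : Fin n) (hij : i ≠ j) (k m : Fin n) :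
    HasDerivAt (fun θ => rotB n i j θ k m)
      ((if k = i ∧ m = j then (-1 : ℝ) else 0) + (if k = j ∧ m = i then 1 else 0)) 0 := by
  have h : HasDerivAt (fun θ =>
      (if k = m ∧ (k = i ∨ k = j) then Real.cos θ else 0) +
      (if k = i ∧ m = j then -Real.sin θ else 0) +
      (if k = j ∧ m = i then Real.sin θ else 0) +
      (if k = m ∧ ¬(k = i ∨ k = j) then 1 else 0))
      ((if k = m ∧ (k = i ∨ k = j) then -Real.sin 0 else 0) +
       (if k = i ∧ m = j then -Real.cos 0 else 0) +
       (if k = j ∧ m = i then Real.cos 0 else 0) +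
       (if k = m ∧ ¬(k = i ∨ k = j) then 0 else 0)) 0 :=
    (((hasDerivAt_ite_aux (Real.hasDerivAt_cos 0)).add
      (hasDerivAt_ite_aux ((Real.hasDerivAt_sin 0).neg))).add
      (hasDerivAt_ite_aux (Real.hasDerivAt_sin 0))).add
      (hasDerivAt_ite_aux (hasDerivAt_const 0 1))
  have h2 : HasDerivAt (fun θ => rotB n i j θ k m) _ 0 :=
    h.congr_of_eventuallyEq (Filter.Eventually.of_forall fun θ => (rotB_eq n i j hij θ k m))
  convert h2 using 1
  simp

lemma entry_eq {n : ℕ} {A : Matrix (Fin n) (Fin n) ℝ} (hdiag : A.IsDiag)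
    (B C : Matrix (Fin n) (Fin n) ℝ) (k : Fin n) :
    (A * B * C) k k = ∑ m, A k k * B k m * C m k := by
  rw [Matrix.mul_apply]
  refine Finset.sum_congr rfl fun m _ => ?_
  rw [Matrix.mul_apply]
  congr 1
  rw [Finset.sum_eq_single k]
  · intro l _ hl
    rw [hdiag (Ne.symm hl), zero_mul]
  · intro hk; exact absurd (Finset.mem_univ k) hk

lemma key_entry (n : ℕ) (c : Fin n → ℝ) (A : Matrix (Fin n) (Fin n) ℝ)
    (hdiag : A.IsDiag) (i j a b : Fin n) (hij : i < j) (hab : a < b) :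
    deriv (fun φ => deriv
      (fun θ => ∑ k, c k * (A * rotB n i j θ * rotB n a b φ) k k) 0) 0 =
      if i = a ∧ j = b then -(c i * A i i) - c j * A j j else 0 := by
  have hij' : i ≠ j := ne_of_lt hij
  have hab' : a ≠ b := ne_of_lt hab
  have inner : ∀ φ, deriv (fun θ => ∑ k, c k * (A * rotB n i j θ * rotB n a b φ) k k) 0
      = -(c i * A i i) * rotB n a b φ j i + c j * A j j * rotB n a b φ i j := by
    intro φ
    have h1 : HasDerivAt (fun θ => ∑ k, c k * (A * rotB n i j θ * rotB n a b φ) k k)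
        (∑ k, c k * ∑ m, A k k *
          ((if k = i ∧ m = j then (-1 : ℝ) else 0) + (if k = j ∧ m = i then 1 else 0)) *
          rotB n a b φ m k) 0 := by
      have heq : (fun θ => ∑ k, c k * (A * rotB n i j θ * rotB n a b φ) k k)
          = fun θ => ∑ k, c k * ∑ m, A k k * rotB n i j θ k m * rotB n a b φ m k := by
        funext θ
        exact Finset.sum_congr rfl fun k _ => by rw [entry_eq hdiag]
      rw [heq]
      apply HasDerivAt.fun_sum
      intro k _
      apply HasDerivAt.const_mul
      apply HasDerivAt.fun_sum
      intro m _
      exact ((hasDerivAt_rotB n i j hij' k m).const_mul (A k k)).mul_const _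
    rw [h1.deriv]
    have haux : ∀ (P : Prop) [Decidable P] (f : Fin n → ℝ) (w : Fin n),
        (∑ x, if P then (if x = w then f x else 0) else 0) = if P then f w else 0 := by
      intro P _ f w
      split_ifs with h <;> simp
    simp only [mul_add, add_mul, mul_ite, ite_mul, mul_zero, zero_mul, mul_one, mul_neg_one,
      Finset.sum_add_distrib, ite_and, haux]
    simp only [mul_ite, mul_zero, Finset.sum_ite_eq', Finset.mem_univ, if_true]
    ring
  have hfun : (fun φ => deriv (fun θ => ∑ k, c k * (A * rotB n i j θ * rotB n a b φ) k k) 0)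
      = fun φ => -(c i * A i i) * rotB n a b φ j i + c j * A j j * rotB n a b φ i j :=
    funext inner
  rw [hfun]
  have h2 := ((hasDerivAt_rotB n a b hab' j i).const_mul (-(c i * A i i))).fun_add
    ((hasDerivAt_rotB n a b hab' i j).const_mul (c j * A j j))
  rw [h2.deriv]
  have hna : ¬(j = a ∧ i = b) := by rintro ⟨rfl, rfl⟩; exact absurd hab (lt_asymm hij)
  have hnb : ¬(i = b ∧ j = a) := by rintro ⟨rfl, rfl⟩; exact absurd hab (lt_asymm hij)
  by_cases h : i = a ∧ j = b
  · obtain ⟨rfl, rfl⟩ := h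
    simp [hij', Ne.symm hij']
    ring
  · have hjb : ¬(j = b ∧ i = a) := fun hx => h ⟨hx.2, hx.1⟩
    simp [h, hna, hnb, hjb]

/-- For `0 ≤ c 0 < ... < c (n-1)` and a diagonal `A ∈ SO(n)` with diagonal
entries `εᵢ = ±1`, the Hessian of `f_C` at `A` in the rotation coordinates `B_{ij}` is
diagonal with entries `-cᵢεᵢ - cⱼεⱼ` (over pairs `i < j`), all nonzero; hence the Hessian
is invertible, i.e. `A` is a non-degenerate critical point of `f_C`. -/
theorem hessian_diag_nondegenerate (n : ℕ) (c : Fin n → ℝ) (hc : StrictMono c)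
    (hc0 : ∀ i, 0 ≤ c i) (A : Matrix (Fin n) (Fin n) ℝ)
    (hA : A ∈ Matrix.specialOrthogonalGroup (Fin n) ℝ) (hdiag : A.IsDiag)
    (hpm : ∀ i, A i i = 1 ∨ A i i = -1) :
    (∀ p q : Pairs n, hessB n c A p q =
        if p = q then -(c p.1.1 * A p.1.1 p.1.1) - c p.1.2 * A p.1.2 p.1.2 else 0) ∧
      (∀ p : Pairs n, hessB n c A p p ≠ 0) ∧ (hessB n c A).det ≠ 0 := by
  have key : ∀ p q : Pairs n, hessB n c A p q =
      if p = q then -(c p.1.1 * A p.1.1 p.1.1) - c p.1.2 * A p.1.2 p.1.2 else 0 := by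
    rintro ⟨⟨i, j⟩, hij⟩ ⟨⟨a, b⟩, hab⟩
    have hk := key_entry n c A hdiag i j a b hij hab
    simp only [hessB, Matrix.of_apply]
    change deriv (fun φ => deriv (fun θ => ∑ k, c k * (A * rotB n i j θ * rotB n a b φ) k k) 0) 0 = _
    rw [hk]
    have hiff : (i = a ∧ j = b) ↔ ((⟨(i, j), hij⟩ : Pairs n) = ⟨(a, b), hab⟩) := by
      constructor
      · rintro ⟨rfl, rfl⟩; rfl
      · intro h
        injection h with h'
        exact ⟨congrArg Prod.fst h', congrArg Prod.snd h'⟩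
    by_cases hx : i = a ∧ j = b
    · rw [if_pos hx]; exact (if_pos (hiff.mp hx)).symm
    · rw [if_neg hx]; exact (if_neg (mt hiff.mpr hx)).symm
  have hnz : ∀ p : Pairs n, hessB n c A p p ≠ 0 := by
    intro p
    rw [key p p, if_pos rfl]
    have hlt : c p.1.1 < c p.1.2 := hc p.2
    have h0 : 0 ≤ c p.1.1 := hc0 _
    rcases hpm p.1.1 with h1 | h1 <;> rcases hpm p.1.2 with h2 | h2 <;> rw [h1, h2] <;> nlinarith
  refine ⟨key, hnz, ?_⟩
  have hd : hessB n c A =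
      Matrix.diagonal (fun p : Pairs n => -(c p.1.1 * A p.1.1 p.1.1) - c p.1.2 * A p.1.2 p.1.2) := by
    ext p q
    rw [key p q, Matrix.diagonal_apply]
  rw [hd, Matrix.det_diagonal]
  refine Finset.prod_ne_zero_iff.mpr fun p _ => ?_
  have hp := hnz p
  rw [key p p, if_pos rfl] at hp
  exact hp
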